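/- An infinite string α over an alphabet Σ partitioned into left brackets, right brackets, and neutral symbols is well-nested (i.e., a concatenation of infinitely many elementary well-nested finite strings) if and only if α has infinitely many well-nested finite prefixes. -/

import Mathlib

/-- Classification of alphabet symbols: left bracket, right bracket, or neutral. -/
inductive Kind : Type
  | left | right | neutral
deriving DecidableEq

/-- The set of well-nested finite strings over an alphabet `A` classified by `k`. -/
inductive WN {A : Type} (k : A → Kind) : List A → Prop
  | nil : WN k []
  | neutral (c : A) : k c = Kind.neutral → WN k [c]
  | append {u v : List A} : WN k u → WN k v → WN k (u ++ v)
  | enclose (l r : A) {u : List A} : k l = Kind.left → k r = Kind.right →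
      WN k u → WN k (l :: u ++ [r])

/-- Elementary well-nested strings: a neutral symbol, or a well-nested string in brackets. -/
def EWN {A : Type} (k : A → Kind) : Set (List A) :=
  {w | (∃ c, k c = Kind.neutral ∧ w = [c]) ∨
       ∃ l r u, k l = Kind.left ∧ k r = Kind.right ∧ WN k u ∧ w = l :: u ++ [r]}

/-- `u` is a prefix of the infinite string `α`. -/
def FunPrefix {A : Type} (u : List A) (α : ℕ → A) : Prop :=
  ∀ i : ℕ, ∀ h : i < u.length, u.get ⟨i, h⟩ = α i

/-- The infinite string `α` is the infinite concatenation of the finite strings `x 0, x 1, …`. -/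
def Concats {A : Type} (x : ℕ → List A) (α : ℕ → A) : Prop :=
  ∀ n : ℕ, FunPrefix ((List.range n).flatMap x) α

/-- An infinite string is well-nested if it is an infinite concatenation of
elementary well-nested finite strings. -/
def WNomega {A : Type} (k : A → Kind) (α : ℕ → A) : Prop :=
  ∃ x : ℕ → List A, (∀ i, x i ∈ EWN k) ∧ Concats x α


namespace WNAux
variable {A : Type} (k : A → Kind)

def wt (a : A) : ℤ := match k a with | .left => 1 | .right => -1 | .neutral => 0

def bal (w : List A) : ℤ := (w.map (wt k)).sum

lemma bal_nil : bal k ([] : List A) = 0 := rfl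
lemma bal_cons (a : A) (w : List A) : bal k (a :: w) = wt k a + bal k w := by simp [bal]
lemma bal_append (u v : List A) : bal k (u ++ v) = bal k u + bal k v := by simp [bal]

lemma wt_bounds (a : A) : -1 ≤ wt k a ∧ wt k a ≤ 1 := by
  unfold wt; rcases h : k a <;> simp

lemma wt_left {a : A} (h : k a = Kind.left) : wt k a = 1 := by simp [wt, h]
lemma wt_right {a : A} (h : k a = Kind.right) : wt k a = -1 := by simp [wt, h]
lemma wt_neutral {a : A} (h : k a = Kind.neutral) : wt k a = 0 := by simp [wt, h]

lemma right_of_wt {a : A} (h : wt k a = -1) : k a = Kind.right := by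
  unfold wt at h; rcases ha : k a <;> simp [ha] at h ⊢

lemma wn_bal {w : List A} (hw : WN k w) :
    bal k w = 0 ∧ ∀ p q : List A, p ++ q = w → 0 ≤ bal k p := by
  induction hw with
  | nil =>
    refine ⟨rfl, fun p q h => ?_⟩
    rcases List.append_eq_nil_iff.mp h with ⟨rfl, rfl⟩; simp [bal_nil]
  | neutral c hc =>
    refine ⟨by simp [bal_cons, bal_nil, wt_neutral k hc], fun p q h => ?_⟩
    cases p with
    | nil => simp [bal_nil]
    | cons a p' =>
      simp only [List.cons_append, List.cons.injEq] at h
      obtain ⟨rfl, h2⟩ := h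
      rcases List.append_eq_nil_iff.mp h2 with ⟨rfl, rfl⟩
      simp [bal_cons, bal_nil, wt_neutral k hc]
  | append hu hv ihu ihv =>
    refine ⟨by rw [bal_append, ihu.1, ihv.1]; ring, fun p q h => ?_⟩
    rcases List.append_eq_append_iff.mp h with ⟨a', ha1, _⟩ | ⟨c', hp, hv2⟩
    · exact ihu.2 p a' ha1.symm
    · rw [hp, bal_append, ihu.1]
      have := ihv.2 c' q hv2.symm
      linarith
  | enclose l r hl hr hu ih =>
    constructor
    · rw [bal_append, bal_cons, ih.1]
      simp [bal_cons, bal_nil, wt_left k hl, wt_right k hr]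
    · intro p q h
      cases p with
      | nil => simp [bal_nil]
      | cons a p' =>
        simp only [List.cons_append, List.cons.injEq] at h
        obtain ⟨rfl, h2⟩ := h
        rw [bal_cons, wt_left k hl]
        rcases List.append_eq_append_iff.mp h2 with ⟨a', ha1, _⟩ | ⟨c', hp, hv2⟩
        · have := ih.2 p' a' ha1.symm; linarith
        · have hc : bal k c' ≥ -1 := by
            cases c' with
            | nil => simp [bal_nil]
            | cons b c'' =>
              simp only [List.cons_append, List.cons.injEq] at hv2
              obtain ⟨rfl, h3⟩ := hv2
              rcases List.append_eq_nil_iff.mp h3.symm with ⟨rfl, rfl⟩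
              simp [bal_cons, bal_nil, wt_right k hr]
          rw [hp, bal_append, ih.1]
          linarith



lemma bal_wn : ∀ (n : ℕ) (w : List A), w.length ≤ n → bal k w = 0 →
    (∀ p q : List A, p ++ q = w → 0 ≤ bal k p) → WN k w := by
  intro n
  induction n with
  | zero =>
    intro w hlen _ _
    have : w = [] := List.eq_nil_of_length_eq_zero (Nat.le_zero.mp hlen)
    exact this ▸ WN.nil
  | succ n ih =>
    intro w hlen hb hp
    cases w with
    | nil => exact WN.nil
    | cons a t =>
      by_cases hsplit : ∃ p q : List A, p ++ q = a :: t ∧ p ≠ [] ∧ q ≠ [] ∧ bal k p = 0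
      · obtain ⟨p, q, hpq, hpne, hqne, hbp⟩ := hsplit
        have hlp : p.length ≤ n := by
          have h1 : p.length + q.length = t.length + 1 := by
            rw [← List.length_append, hpq, List.length_cons]
          have h2 : 0 < q.length := List.length_pos_iff.mpr hqne
          simp only [List.length_cons] at hlen; omega
        have hlq : q.length ≤ n := by
          have h1 : p.length + q.length = t.length + 1 := by
            rw [← List.length_append, hpq, List.length_cons]
          have h2 : 0 < p.length := List.length_pos_iff.mpr hpne
          simp only [List.length_cons] at hlen; omega
        have hwp : WN k p := by
          refine ih p hlp hbp fun s s' hs => ?_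
          exact hp s (s' ++ q) (by rw [← List.append_assoc, hs, hpq])
        have hwq : WN k q := by
          refine ih q hlq ?_ fun s s' hs => ?_
          · have := hb; rw [← hpq, bal_append, hbp] at this; linarith
          · have := hp (p ++ s) s' (by rw [List.append_assoc, hs, hpq])
            rw [bal_append, hbp] at this; linarith
        exact hpq ▸ WN.append hwp hwq
      · push_neg at hsplit
        have hstrong : ∀ p q : List A, p ++ q = a :: t → p ≠ [] → q ≠ [] → 1 ≤ bal k p := by
          intro p q h hpne hqne
          have h1 := hp p q h
          have h2 := hsplit p q h hpne hqne
          omega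
        rcases ha : k a with _ | _ | _
        · -- left
          have hwa := wt_left k ha
          have ht : t ≠ [] := by
            rintro rfl
            rw [bal_cons, bal_nil, hwa] at hb; omega
          obtain ⟨u, r, rfl⟩ : ∃ u r, t = u ++ [r] :=
            ⟨t.dropLast, t.getLast ht, (List.dropLast_append_getLast ht).symm⟩
          have hbu : 0 ≤ bal k u := by
            have := hstrong (a :: u) [r] (by simp) (by simp) (by simp)
            rw [bal_cons, hwa] at this; linarith
          have hbr := (wt_bounds k r).1
          have hbr2 := (wt_bounds k r).2
          have hbal : wt k a + (bal k u + wt k r) = 0 := by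
            rw [bal_cons, bal_append, bal_cons, bal_nil] at hb; linarith
          rw [hwa] at hbal
          have hrr : wt k r = -1 := by omega
          have hbu0 : bal k u = 0 := by omega
          have hkr : k r = Kind.right := right_of_wt k hrr
          have hwu : WN k u := by
            refine ih u ?_ hbu0 fun s s' hs => ?_
            · have : (a :: (u ++ [r])).length ≤ n + 1 := by simpa using hlen
              simp only [List.length_cons, List.length_append, List.length_singleton] at this
              omega
            · have := hstrong (a :: s) (s' ++ [r])
                (by rw [List.cons_append, ← List.append_assoc, hs]) (by simp) (by simp)
              rw [bal_cons, hwa] at this; linarith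
          exact WN.enclose a r ha hkr hwu
        · -- right
          have := hp [a] t rfl
          rw [bal_cons, bal_nil, wt_right k ha] at this; omega
        · -- neutral
          cases t with
          | nil => exact WN.neutral a ha
          | cons b t' =>
            have := hstrong [a] (b :: t') rfl (by simp) (by simp)
            rw [bal_cons, bal_nil, wt_neutral k ha] at this; omega

lemma bal_wn' {w : List A} (hb : bal k w = 0)
    (hp : ∀ p q : List A, p ++ q = w → 0 ≤ bal k p) : WN k w :=
  bal_wn k w.length w le_rfl hb hp

lemma ewn_of_bal {w : List A} (hne : w ≠ []) (hb : bal k w = 0)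
    (hp : ∀ p q : List A, p ++ q = w → p ≠ [] → q ≠ [] → 1 ≤ bal k p) : w ∈ EWN k := by
  cases w with
  | nil => exact absurd rfl hne
  | cons a t =>
    rcases ha : k a with _ | _ | _
    · -- left
      have hwa := wt_left k ha
      have ht : t ≠ [] := by
        rintro rfl; rw [bal_cons, bal_nil, hwa] at hb; omega
      obtain ⟨u, r, rfl⟩ : ∃ u r, t = u ++ [r] :=
        ⟨t.dropLast, t.getLast ht, (List.dropLast_append_getLast ht).symm⟩
      have hbu : 0 ≤ bal k u := by
        have := hp (a :: u) [r] (by simp) (by simp) (by simp)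
        rw [bal_cons, hwa] at this; linarith
      have hbr := (wt_bounds k r).1
      have hbal : wt k a + (bal k u + wt k r) = 0 := by
        rw [bal_cons, bal_append, bal_cons, bal_nil] at hb; linarith
      rw [hwa] at hbal
      have hrr : wt k r = -1 := by omega
      have hbu0 : bal k u = 0 := by omega
      have hkr : k r = Kind.right := right_of_wt k hrr
      have hwu : WN k u := by
        refine bal_wn' k hbu0 fun s s' hs => ?_
        have := hp (a :: s) (s' ++ [r])
          (by rw [List.cons_append, ← List.append_assoc, hs]) (by simp) (by simp)
        rw [bal_cons, hwa] at this; linarith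
      exact Or.inr ⟨a, r, u, ha, hkr, hwu, by simp⟩
    · -- right
      cases t with
      | nil => rw [bal_cons, bal_nil, wt_right k ha] at hb; omega
      | cons b t' =>
        have := hp [a] (b :: t') rfl (by simp) (by simp)
        rw [bal_cons, bal_nil, wt_right k ha] at this; omega
    · -- neutral
      cases t with
      | nil => exact Or.inl ⟨a, ha, rfl⟩
      | cons b t' =>
        have := hp [a] (b :: t') rfl (by simp) (by simp)
        rw [bal_cons, bal_nil, wt_neutral k ha] at this; omega

lemma ewn_wn {w : List A} (hw : w ∈ EWN k) : WN k w ∧ w ≠ [] := by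
  rcases hw with ⟨c, hc, rfl⟩ | ⟨l, r, u, hl, hr, hu, rfl⟩
  · exact ⟨WN.neutral c hc, by simp⟩
  · exact ⟨WN.enclose l r hl hr hu, by simp⟩

end WNAux


namespace WNAux

lemma map_range_add' {A : Type} (α : ℕ → A) (m d : ℕ) :
    (List.range (m + d)).map α = (List.range m).map α
      ++ (List.range d).map (fun j => α (m + j)) := by
  rw [List.range_add, List.map_append, List.map_map]; rfl

lemma funprefix_eq {A : Type} (α : ℕ → A) (u : List A) (h : FunPrefix u α) :
    u = (List.range u.length).map α := by
  apply List.ext_get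
  · simp
  · intro i h1 h2
    simp only [List.get_eq_getElem, List.getElem_map, List.getElem_range]
    exact h i h1

lemma funprefix_map_range {A : Type} (α : ℕ → A) (m : ℕ) :
    FunPrefix ((List.range m).map α) α := by
  intro i hi
  simp only [List.get_eq_getElem, List.getElem_map, List.getElem_range]

end WNAux


open WNAux in
theorem wnomega_iff_infinitely_many_wellnested_prefixes
    {A : Type} (k : A → Kind) (α : ℕ → A) :
    WNomega k α ↔ {n : ℕ | WN k ((List.range n).map α)}.Infinite := by
  constructor
  · rintro ⟨x, hx, hc⟩
    set L : ℕ → ℕ := fun n => ((List.range n).flatMap x).length with hL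
    have hkey : ∀ n, (List.range (L n)).map α = (List.range n).flatMap x :=
      fun n => (funprefix_eq α _ (hc n)).symm
    have hWN : ∀ n, WN k ((List.range n).flatMap x) := by
      intro n
      induction n with
      | zero => simpa using WN.nil
      | succ n ih =>
        rw [List.range_succ, List.flatMap_append]
        exact WN.append ih (by simpa using (ewn_wn k (hx n)).1)
    have hmono : StrictMono L := by
      apply strictMono_nat_of_lt_succ
      intro n
      have hstep : L (n + 1) = L n + (x n).length := by
        simp [hL, List.range_succ]
      have hpos : 0 < (x n).length := List.length_pos_iff.mpr (ewn_wn k (hx n)).2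
      omega
    exact Set.infinite_of_injective_forall_mem hmono.injective
      (fun n => by rw [Set.mem_setOf_eq, hkey]; exact hWN n)
  · intro h
    set H : ℕ → ℤ := fun n => bal k ((List.range n).map α) with hH
    have hpref : ∀ m n : ℕ, m ≤ n → ((List.range n).map α) =
        ((List.range m).map α) ++ (List.range (n - m)).map (fun j => α (m + j)) := by
      intro m n hmn
      rw [← map_range_add' α m (n - m), Nat.add_sub_cancel' hmn]
    have hSz : ∀ n ∈ {n : ℕ | WN k ((List.range n).map α)}, H n = 0 :=
      fun n hn => (wn_bal k hn).1
    have hSpre : ∀ n ∈ {n : ℕ | WN k ((List.range n).map α)}, ∀ m ≤ n, 0 ≤ H m :=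
      fun n hn m hm => (wn_bal k hn).2 ((List.range m).map α) _ (hpref m n hm).symm
    have hnonneg : ∀ m, 0 ≤ H m := by
      intro m
      obtain ⟨n, hnS, hmn⟩ := h.exists_gt m
      exact hSpre n hnS m hmn.le
    set p : ℕ → Prop := fun n => H n = 0 with hp
    have hZ : (setOf p).Infinite := h.mono (fun n hn => hSz n hn)
    set e : ℕ → ℕ := Nat.nth p with he
    have he0 : e 0 = 0 := by
      rw [he, Nat.nth_zero]
      exact Nat.sInf_eq_zero.mpr (Or.inl (by simp [hp, hH, bal_nil]))
    have hemono : StrictMono e := Nat.nth_strictMono hZ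
    have hez : ∀ n, H (e n) = 0 := Nat.nth_mem_of_infinite hZ
    have hgap : ∀ n m, e n < m → m < e (n + 1) → H m ≠ 0 := by
      intro n m h1 h2 hm
      have hmem : m ∈ Set.range e := by rw [he, Nat.range_nth_of_infinite hZ]; exact hm
      obtain ⟨i, rfl⟩ := hmem
      have hi1 := hemono.lt_iff_lt.mp h1
      have hi2 := hemono.lt_iff_lt.mp h2
      omega
    set x : ℕ → List A := fun n => (List.range (e (n + 1) - e n)).map (fun j => α (e n + j))
      with hx
    have hadd : ∀ n, e n + (e (n + 1) - e n) = e (n + 1) :=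
      fun n => Nat.add_sub_cancel' (hemono (Nat.lt_succ_self n)).le
    have hdpos : ∀ n, 0 < e (n + 1) - e n :=
      fun n => Nat.sub_pos_of_lt (hemono (Nat.lt_succ_self n))
    have hsplit : ∀ n, (List.range (e (n + 1))).map α = (List.range (e n)).map α ++ x n := by
      intro n
      rw [← hadd n, map_range_add']
    have hbalx : ∀ n, bal k (x n) = 0 := by
      intro n
      have h1 : H (e (n + 1)) = H (e n) + bal k (x n) := by
        rw [hH]; simp only; rw [hsplit n, bal_append]
      rw [hez, hez] at h1
      linarith
    have hflat : ∀ n, (List.range n).flatMap x = (List.range (e n)).map α := by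
      intro n
      induction n with
      | zero => simp [he0]
      | succ n ih =>
        rw [List.range_succ, List.flatMap_append, ih, hsplit n]
        simp
    refine ⟨x, fun n => ?_, fun n => ?_⟩
    · apply ewn_of_bal k ?_ (hbalx n)
      · intro s q hsq hsne hqne
        set j : ℕ := s.length with hj
        have hjd : j < e (n + 1) - e n := by
          have h1 : j + q.length = e (n + 1) - e n := by
            rw [hj, ← List.length_append, hsq, hx]; simp
          have h2 : 0 < q.length := List.length_pos_iff.mpr hqne
          omega
        have hs : s = (List.range j).map (fun i => α (e n + i)) := by
          have h1 : s = (x n).take j := by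
            rw [← hsq, hj, List.take_left]
          rw [h1, hx]; simp only
          rw [← List.map_take, List.take_range, Nat.min_eq_left hjd.le]
        have hHj : H (e n + j) = bal k s := by
          have h2 := map_range_add' α (e n) j
          rw [hH]; simp only
          rw [h2, bal_append, ← hs]
          have := hez n
          rw [hH] at this; simp only at this
          rw [this]; ring
        have hne0 : H (e n + j) ≠ 0 := by
          apply hgap n
          · have : 0 < j := List.length_pos_iff.mpr hsne
            omega
          · have := hadd n
            omega
        have hge := hnonneg (e n + j)
        rw [hHj] at hne0 hge
        omega
      · rw [hx]; simp only [ne_eq, List.map_eq_nil_iff, List.range_eq_nil]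
        have := hdpos n
        omega
    · rw [hflat n]
      exact funprefix_map_range α (e n)
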